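/- Let G be the directed graph with two vertices I and J and five edges: a self-loop e at I, an edge f from I to J, two self-loops g and h at J, and an edge i from J to I. Label the edges by Φ(e) = Φ(f) = Φ(g) = Φ(h) = a and Φ(i) = b, let X be the edge shift of G (the shift of finite type whose points are bi-infinite edge paths in G), let π : X → Y be the induced 1-block factor map onto the sofic shift Y, and let μ be the stationary fully supported 1-step Markov measure on X with transition probabilities 1/2 on e, 1/2 on f, 1/4 on g, 1/4 on h and 1/2 on i. Then the push-forward measure ν = πμ is not a Gibbs measure for any continuous potential f : Y → ℝ (indeed ν([aⁿ]₀) equals (2+n)·2⁻ⁿ up to the choice of initial distribution, and no exponential (exp f(a^∞))ⁿ can match the decay of n·2⁻ⁿ). -/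

import Mathlib

open MeasureTheory Filter Topology
open scoped ENNReal

namespace GibbsPaper

universe u

variable {A : Type*} {B : Type*}

/-- The shift map `(σ x) i = x (i+1)` on the full shift `ℤ → A`. -/
def shiftMap (x : ℤ → A) : ℤ → A := fun i => x (i + 1)

/-- The 1-step shift of finite type determined by the allowed-transition set `E`. -/
def SFT (E : Set (A × A)) : Set (ℤ → A) := {x | ∀ i : ℤ, (x i, x (i + 1)) ∈ E}

/-- `w` is a word of the language of `X`. -/
def WordIn (X : Set (ℤ → A)) (w : List A) : Prop :=
  ∃ x ∈ X, ∃ k : ℤ, ∀ j : Fin w.length, x (k + (j.1 : ℤ)) = w.get j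

/-- `X` is (topologically) mixing. -/
def Mixing (X : Set (ℤ → A)) : Prop :=
  ∀ u w : List A, WordIn X u → WordIn X w →
    ∃ N : ℕ, ∀ n : ℕ, N ≤ n → ∃ v : List A, v.length = n ∧ WordIn X (u ++ v ++ w)

/-- The 1-block (sliding block) code induced by a symbol map `Φ`. -/
def blockCode (Φ : A → B) (x : ℤ → A) : ℤ → B := fun i => Φ (x i)

/-- The fiber `π⁻¹(y)` of the 1-block factor map induced by `Φ`. -/
def fiber (X : Set (ℤ → A)) (Φ : A → A) (y : ℤ → A) : Set (ℤ → A) :=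
  {x | x ∈ X ∧ blockCode Φ x = y}

/-- `xb` is a right `m`-bridge from `x` to `x'` (all of them preimages of `y`). -/
def RightBridge (X : Set (ℤ → A)) (Φ : A → A) (y x x' xb : ℤ → A) (m : ℤ) : Prop :=
  xb ∈ fiber X Φ y ∧ (∀ i : ℤ, i ≤ m → xb i = x i) ∧
    ∃ n : ℤ, m < n ∧ ∀ i : ℤ, n ≤ i → xb i = x' i

/-- Right transition `x →ʳ x'`: a right `m`-bridge from `x` to `x'` for every `m`. -/
def RightTrans (X : Set (ℤ → A)) (Φ : A → A) (y x x' : ℤ → A) : Prop :=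
  ∀ m : ℤ, ∃ xb : ℤ → A, RightBridge X Φ y x x' xb m

/-- Right equivalence `x ∼ʳ x'`. -/
def RightEquiv (X : Set (ℤ → A)) (Φ : A → A) (y x x' : ℤ → A) : Prop :=
  RightTrans X Φ y x x' ∧ RightTrans X Φ y x' x

/-- The right transition class of `x` over `y`. -/
def rightClass (X : Set (ℤ → A)) (Φ : A → A) (y x : ℤ → A) : Set (ℤ → A) :=
  {x' | x' ∈ fiber X Φ y ∧ RightEquiv X Φ y x x'}

/-- `C` is a right transition class over `y`. -/
def IsRightClass (X : Set (ℤ → A)) (Φ : A → A) (y : ℤ → A) (C : Set (ℤ → A)) : Prop :=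
  ∃ x ∈ fiber X Φ y, C = rightClass X Φ y x

/-- Transition `C →ʳ C'` between right classes. -/
def ClassTrans (X : Set (ℤ → A)) (Φ : A → A) (y : ℤ → A) (C C' : Set (ℤ → A)) : Prop :=
  ∃ x ∈ C, ∃ x' ∈ C', RightTrans X Φ y x x'

/-- `xb` is a left `m`-bridge from `x` to `x'`. -/
def LeftBridge (X : Set (ℤ → A)) (Φ : A → A) (y x x' xb : ℤ → A) (m : ℤ) : Prop :=
  xb ∈ fiber X Φ y ∧ (∀ i : ℤ, m ≤ i → xb i = x i) ∧
    ∃ n : ℤ, n < m ∧ ∀ i : ℤ, i ≤ n → xb i = x' i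

/-- Left transition `x →ˡ x'`. -/
def LeftTrans (X : Set (ℤ → A)) (Φ : A → A) (y x x' : ℤ → A) : Prop :=
  ∀ m : ℤ, ∃ xb : ℤ → A, LeftBridge X Φ y x x' xb m

/-- Left equivalence `x ∼ˡ x'`. -/
def LeftEquiv (X : Set (ℤ → A)) (Φ : A → A) (y x x' : ℤ → A) : Prop :=
  LeftTrans X Φ y x x' ∧ LeftTrans X Φ y x' x

/-- The left transition class of `x` over `y`. -/
def leftClass (X : Set (ℤ → A)) (Φ : A → A) (y x : ℤ → A) : Set (ℤ → A) :=
  {x' | x' ∈ fiber X Φ y ∧ LeftEquiv X Φ y x x'}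

/-- `C` is a left transition class over `y`. -/
def IsLeftClass (X : Set (ℤ → A)) (Φ : A → A) (y : ℤ → A) (C : Set (ℤ → A)) : Prop :=
  ∃ x ∈ fiber X Φ y, C = leftClass X Φ y x

/-- Two points are left asymptotic. -/
def LeftAsymp (y y' : ℤ → A) : Prop := ∃ n : ℤ, ∀ i : ℤ, i ≤ n → y i = y' i

/-- Two points are right asymptotic. -/
def RightAsymp (y y' : ℤ → A) : Prop := ∃ n : ℤ, ∀ i : ℤ, n ≤ i → y i = y' i

/-- The factor map induced by `Φ` is right continuing. -/
def RightContinuing (X : Set (ℤ → A)) (Φ : A → A) : Prop :=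
  ∀ x ∈ X, ∀ y ∈ blockCode Φ '' X, LeftAsymp (blockCode Φ x) y →
    ∃ x' ∈ fiber X Φ y, LeftAsymp x x'

/-- The factor map induced by `Φ` is left continuing. -/
def LeftContinuing (X : Set (ℤ → A)) (Φ : A → A) : Prop :=
  ∀ x ∈ X, ∀ y ∈ blockCode Φ '' X, RightAsymp (blockCode Φ x) y →
    ∃ x' ∈ fiber X Φ y, RightAsymp x x'

/-- Bi-continuing factor map. -/
def BiContinuing (X : Set (ℤ → A)) (Φ : A → A) : Prop :=
  RightContinuing X Φ ∧ LeftContinuing X Φ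

/-- `y` is a (σ-)periodic point. -/
def IsPeriodicPt (y : ℤ → A) : Prop := ∃ p : ℕ, 0 < p ∧ shiftMap^[p] y = y

/-- `p` is the smallest period of the periodic point `y`. -/
def IsLeastPeriod (y : ℤ → A) (p : ℕ) : Prop :=
  0 < p ∧ shiftMap^[p] y = y ∧ ∀ q : ℕ, 0 < q → shiftMap^[q] y = y → p ≤ q

/-- The set `C` has period `p` (`σᵖ C = C`). -/
def HasClassPeriod (C : Set (ℤ → A)) (p : ℕ) : Prop :=
  0 < p ∧ (shiftMap^[p]) '' C = C

/-- `p` is the smallest period of the set `C`. -/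
def IsLeastClassPeriod (C : Set (ℤ → A)) (p : ℕ) : Prop :=
  HasClassPeriod C p ∧ ∀ q : ℕ, HasClassPeriod C q → p ≤ q

/-- The cylinder set of the word `w` placed at coordinate `k`. -/
def cylList (k : ℤ) (w : List A) : Set (ℤ → A) :=
  {x | ∀ j : Fin w.length, x (k + (j.1 : ℤ)) = w.get j}

/-- The cylinder set of all points agreeing with `z` on the coordinates `[m, n]`. -/
def cylSeg (z : ℤ → A) (m n : ℤ) : Set (ℤ → A) :=
  {x | ∀ i : ℤ, m ≤ i → i ≤ n → x i = z i}

/-- The union of the cylinder sets (on coordinates `[m,n]`) of the blocks appearing in `S`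
on the interval `[m,n]`. -/
def blockUnion (S : Set (ℤ → A)) (m n : ℤ) : Set (ℤ → A) :=
  {x | ∃ x' ∈ S, ∀ i : ℤ, m ≤ i → i ≤ n → x i = x' i}

/-- The transition-probability weight of a chain starting at `a`. -/
noncomputable def chainProb (P : A → A → ℝ≥0∞) : A → List A → ℝ≥0∞
  | _, [] => 1
  | a, b :: l => P a b * chainProb P b l

/-- The Markov probability of a word. -/
noncomputable def wordProb (p : A → ℝ≥0∞) (P : A → A → ℝ≥0∞) : List A → ℝ≥0∞
  | [] => 1
  | a :: l => p a * chainProb P a l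

/-- `μ` is the 1-step (stationary) Markov measure on `X` with initial probability vector `p`
and stochastic matrix `P`. -/
structure IsMarkov [Fintype A] [MeasurableSpace A] (X : Set (ℤ → A))
    (μ : Measure (ℤ → A)) (p : A → ℝ≥0∞) (P : A → A → ℝ≥0∞) : Prop where
  isProb : IsProbabilityMeasure μ
  shiftInv : ∀ s : Set (ℤ → A), MeasurableSet s → μ (shiftMap ⁻¹' s) = μ s
  initSum : ∑ a : A, p a = 1
  rowSum : ∀ a : A, ∑ b : A, P a b = 1
  cylIn : ∀ w : List A, WordIn X w → μ (cylList 0 w) = wordProb p P w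
  cylOut : ∀ w : List A, ¬ WordIn X w → μ (cylList 0 w) = 0

/-- `μ` gives positive measure to every cylinder of a word of the language of `X`. -/
def FullySupported [Fintype A] [MeasurableSpace A] (X : Set (ℤ → A))
    (μ : Measure (ℤ → A)) : Prop :=
  ∀ w : List A, WordIn X w → 0 < μ (cylList 0 w)

/-- `μ` is a fully supported 1-step Markov measure on `X`. -/
def IsFSMarkov [Fintype A] [MeasurableSpace A] (X : Set (ℤ → A))
    (μ : Measure (ℤ → A)) : Prop :=
  ∃ p P, IsMarkov X μ p P ∧ FullySupported X μ

/-- Birkhoff sum `S_0^{n-1} f (z)`. -/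
def birkhoff (f : (ℤ → A) → ℝ) (z : ℤ → A) (n : ℕ) : ℝ :=
  ∑ j ∈ Finset.range n, f (shiftMap^[j] z)

/-- The two-sided Gibbs inequality for `ν` on `Y` with potential `f`, constants `K₁, K₂`
and pressure constant `Pr`. -/
def GibbsIneq [Fintype A] [MeasurableSpace A] (Y : Set (ℤ → A)) (ν : Measure (ℤ → A))
    (f : (ℤ → A) → ℝ) (K₁ K₂ Pr : ℝ) : Prop :=
  ∀ z ∈ Y, ∀ n : ℕ, 1 ≤ n →
    K₁ < (ν (cylSeg z 0 ((n : ℤ) - 1))).toReal /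
        Real.exp (-(n : ℝ) * Pr + birkhoff f z n) ∧
    (ν (cylSeg z 0 ((n : ℤ) - 1))).toReal /
        Real.exp (-(n : ℝ) * Pr + birkhoff f z n) < K₂

/-- `ν` is a Gibbs measure on `Y` for the potential `f`. -/
def IsGibbs [Fintype A] [MeasurableSpace A] (Y : Set (ℤ → A)) (ν : Measure (ℤ → A))
    (f : (ℤ → A) → ℝ) : Prop :=
  ∃ K₁ K₂ Pr : ℝ, 0 < K₁ ∧ 0 < K₂ ∧ GibbsIneq Y ν f K₁ K₂ Pr


/-! ### Example 3.1: the labelled graph of Figure 1 -/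

/-- The five edges of the graph in Figure 1: `e` is a self-loop at the vertex `I`,
`f` goes from `I` to `J`, `g` and `h` are self-loops at `J`, and `i` goes from `J`
back to `I`. -/
inductive Edge5 : Type
  | e | f | g | h | i
deriving DecidableEq

instance instFintypeEdge5 : Fintype Edge5 where
  elems := {.e, .f, .g, .h, .i}
  complete := fun x => by cases x <;> simp

instance : MeasurableSpace Edge5 := ⊤
instance : TopologicalSpace Edge5 := ⊥
instance : DiscreteTopology Edge5 := ⟨rfl⟩

/-- Source vertex of an edge (`false` = `I`, `true` = `J`). -/
def src5 : Edge5 → Bool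
  | .e => false | .f => false | .g => true | .h => true | .i => true

/-- Target vertex of an edge. -/
def tgt5 : Edge5 → Bool
  | .e => false | .f => true | .g => true | .h => true | .i => false

/-- Allowed transitions of the edge shift: consecutive edges must be composable. -/
def EdgeSet5 : Set (Edge5 × Edge5) := {q | tgt5 q.1 = src5 q.2}

/-- The labelling of Figure 1: `e, f, g, h` are labelled `a` and `i` is labelled `b`
(we represent the label `a` by the symbol `e` and the label `b` by the symbol `i`). -/
def Label5 : Edge5 → Edge5
  | .i => .i
  | _ => .e

/-- The transition probability assigned to each edge (from its source vertex):
`1/2` on `e`, `1/2` on `f`, `1/4` on `g`, `1/4` on `h` and `1/2` on `i`. -/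
noncomputable def q5 : Edge5 → ℝ≥0∞
  | .e => 1/2 | .f => 1/2 | .g => 1/4 | .h => 1/4 | .i => 1/2

/-- The stochastic matrix on edges induced by the transition probabilities. -/
noncomputable def P5 : Edge5 → Edge5 → ℝ≥0∞ :=
  fun u v => if tgt5 u = src5 v then q5 v else 0


/-! ### Auxiliary lemmas for Example 3.1 -/

section Aux

instance : MeasurableSingletonClass Edge5 := ⟨fun _ => trivial⟩

lemma measurable_label5 : Measurable Label5 := fun _ _ => trivial

lemma measurable_blockCode5 : Measurable (blockCode Label5) :=
  measurable_pi_lambda _ fun i => measurable_label5.comp (measurable_pi_apply i)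

lemma measurableSet_cylList (k : ℤ) (w : List Edge5) : MeasurableSet (cylList k w) := by
  have h : cylList k w =
      ⋂ j : Fin w.length, (fun x : ℤ → Edge5 => x (k + (j.1 : ℤ))) ⁻¹' {w.get j} := by
    ext x; simp [cylList, Set.mem_iInter]
  rw [h]
  exact MeasurableSet.iInter fun j => measurable_pi_apply _ trivial

lemma measurableSet_cylSeg (z : ℤ → Edge5) (m n : ℤ) : MeasurableSet (cylSeg z m n) := by
  have h : cylSeg z m n = ⋂ i : ℤ, {x : ℤ → Edge5 | m ≤ i → i ≤ n → x i = z i} := by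
    ext x; simp [cylSeg, Set.mem_iInter]
  rw [h]
  refine MeasurableSet.iInter fun i => ?_
  by_cases hmn : m ≤ i ∧ i ≤ n
  · have h2 : {x : ℤ → Edge5 | m ≤ i → i ≤ n → x i = z i}
        = (fun x : ℤ → Edge5 => x i) ⁻¹' {z i} := by
      ext x; simp [hmn.1, hmn.2]
    rw [h2]; exact measurable_pi_apply i trivial
  · have h2 : {x : ℤ → Edge5 | m ≤ i → i ≤ n → x i = z i} = Set.univ := by
      ext x
      simp only [Set.mem_setOf_eq, Set.mem_univ, iff_true]
      intro h1 h3; exact absurd ⟨h1, h3⟩ hmn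
    rw [h2]; exact MeasurableSet.univ

lemma label5_eq_iff : ∀ u : Edge5, Label5 u = Edge5.e ↔ u ≠ Edge5.i := by decide

lemma loop_tgt : ∀ b : Bool, tgt5 (if b then Edge5.g else Edge5.e) = b := by decide

lemma loop_src : ∀ b : Bool, src5 (if b then Edge5.g else Edge5.e) = b := by decide

lemma sum_edge5 {M : Type*} [AddCommMonoid M] (g : Edge5 → M) :
    ∑ b : Edge5, g b = g .e + g .f + g .g + g .h + g .i := by
  have : (Finset.univ : Finset Edge5) = {Edge5.e, Edge5.f, Edge5.g, Edge5.h, Edge5.i} := rfl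
  rw [this]
  rw [Finset.sum_insert (by decide), Finset.sum_insert (by decide),
    Finset.sum_insert (by decide), Finset.sum_insert (by decide), Finset.sum_singleton]
  simp only [add_assoc]

/-- Composability relation on edges. -/
def Comp5 (u v : Edge5) : Prop := tgt5 u = src5 v

instance : DecidableRel Comp5 := fun u v => decEq _ _

lemma chain_of_chainProb_ne {a : Edge5} {l : List Edge5}
    (h : chainProb P5 a l ≠ 0) : List.Chain Comp5 a l := by
  induction l generalizing a with
  | nil => exact List.Chain.nil
  | cons b t ih =>
    have h' : P5 a b * chainProb P5 b t ≠ 0 := h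
    rw [mul_ne_zero_iff] at h'
    have h1 : Comp5 a b := by
      by_contra hc
      exact h'.1 (by simp [P5, Comp5] at hc ⊢; simp [hc])
    exact List.Chain.cons h1 (ih h'.2)

/-- the self-loop at a vertex -/
def loop5 (b : Bool) : Edge5 := if b then Edge5.g else Edge5.e

lemma loop5_tgt : ∀ b : Bool, tgt5 (loop5 b) = b := by decide
lemma loop5_src : ∀ b : Bool, src5 (loop5 b) = b := by decide

lemma wordIn_of_chain (a : Edge5) (l : List Edge5)
    (h : List.Chain Comp5 a l) : WordIn (SFT EdgeSet5) (a :: l) := by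
  set w : List Edge5 := a :: l with hw
  have hlen : 0 < w.length := by simp [hw]
  have hch : ∀ (i : ℕ) (hi : i + 1 < w.length),
      tgt5 (w.get ⟨i, by omega⟩) = src5 (w.get ⟨i + 1, hi⟩) := by
    have := List.isChain_iff_getElem.1 (show List.Chain' Comp5 w from h)
    intro i hi
    exact this i (by omega)
  set xlast : Edge5 := loop5 (tgt5 (w.get ⟨w.length - 1, by omega⟩)) with hxl
  set x : ℤ → Edge5 := fun i =>
    if hi : 0 ≤ i ∧ i.toNat < w.length then w.get ⟨i.toNat, hi.2⟩
    else if i < 0 then loop5 (src5 a) else xlast with hx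
  have hxneg : ∀ i : ℤ, i < 0 → x i = loop5 (src5 a) := by
    intro i hi
    simp only [hx]
    rw [dif_neg (by omega), if_pos hi]
  have hxin : ∀ i : ℤ, 0 ≤ i → (hi : i.toNat < w.length) → x i = w.get ⟨i.toNat, hi⟩ := by
    intro i hi0 hi
    simp only [hx]
    rw [dif_pos ⟨hi0, hi⟩]
  have hxout : ∀ i : ℤ, 0 ≤ i → ¬ (i.toNat < w.length) → x i = xlast := by
    intro i hi0 hi
    simp only [hx]
    rw [dif_neg (by tauto), if_neg (by omega)]
  have hX : x ∈ SFT EdgeSet5 := by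
    intro i
    show tgt5 (x i) = src5 (x (i + 1))
    rcases lt_trichotomy i (-1) with hi | hi | hi
    · rw [hxneg i (by omega), hxneg (i+1) (by omega), loop5_tgt, loop5_src]
    · subst hi
      rw [hxneg (-1) (by omega), loop5_tgt]
      rw [show (-1 : ℤ) + 1 = 0 from rfl, hxin 0 le_rfl (by simpa using hlen)]
      simp [hw]
    · have hi0 : 0 ≤ i := by omega
      by_cases h1 : i.toNat + 1 < w.length
      · rw [hxin i hi0 (by omega), hxin (i+1) (by omega) (by omega)]
        have : (i+1).toNat = i.toNat + 1 := by omega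
        simp_rw [this]
        exact hch i.toNat h1
      · by_cases h2 : i.toNat < w.length
        · have h3 : i.toNat = w.length - 1 := by omega
          rw [hxin i hi0 h2, hxout (i+1) (by omega) (by omega), hxl, loop5_src]
          have h4 : (⟨i.toNat, h2⟩ : Fin w.length) = ⟨w.length - 1, by omega⟩ := Fin.ext h3
          rw [h4]
        · rw [hxout i hi0 h2, hxout (i+1) (by omega) (by omega), hxl, loop5_tgt, loop5_src]
  refine ⟨x, hX, 0, fun j => ?_⟩
  have hj : ((j.1 : ℤ)).toNat = j.1 := by omega
  rw [show (0 : ℤ) + (j.1 : ℤ) = (j.1 : ℤ) from by omega]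
  rw [hxin _ (by omega) (by omega)]
  exact congrArg w.get (Fin.ext hj)

lemma not_wordIn_of_not_chain (a : Edge5) (l : List Edge5)
    (h : ¬ List.Chain Comp5 a l) : ¬ WordIn (SFT EdgeSet5) (a :: l) := by
  rintro ⟨x, hxX, k, hk⟩
  apply h
  rw [show List.Chain Comp5 a l ↔ List.IsChain Comp5 (a :: l) from Iff.rfl, List.isChain_iff_getElem]
  intro i hi
  have hlen : (a :: l).length = l.length + 1 := rfl
  have h1 := hk ⟨i, by omega⟩
  have h2 := hk ⟨i + 1, by omega⟩
  have hx := hxX (k + (i : ℤ))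
  show tgt5 ((a :: l).get ⟨i, by omega⟩) = src5 ((a :: l).get ⟨i + 1, hi⟩)
  rw [← h1, ← h2]
  have : k + ((i : ℕ) + 1 : ℕ) = k + (i : ℤ) + 1 := by push_cast; ring
  rw [this]
  exact hx

lemma chainProb_eq_zero_of_not_chain {a : Edge5} {l : List Edge5}
    (h : ¬ List.Chain Comp5 a l) : chainProb P5 a l = 0 := by
  by_contra hc
  exact h (chain_of_chainProb_ne hc)

lemma mu_cylList {μ : Measure (ℤ → Edge5)} {p : Edge5 → ℝ≥0∞}
    (hμ : IsMarkov (SFT EdgeSet5) μ p P5) (a : Edge5) (l : List Edge5) :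
    μ (cylList 0 (a :: l)) = wordProb p P5 (a :: l) := by
  by_cases h : List.Chain Comp5 a l
  · exact hμ.cylIn _ (wordIn_of_chain a l h)
  · rw [hμ.cylOut _ (not_wordIn_of_not_chain a l h)]
    show (0 : ℝ≥0∞) = p a * chainProb P5 a l
    rw [chainProb_eq_zero_of_not_chain h, mul_zero]

/-- Sum of chain probabilities over all `i`-avoiding words of length `m` started at `a`. -/
noncomputable def Fchain (m : ℕ) (a : Edge5) : ℝ≥0∞ :=
  ∑ v : Fin m → Edge5, if ∀ j, v j ≠ Edge5.i then chainProb P5 a (List.ofFn v) else 0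

lemma Fchain_zero (a : Edge5) : Fchain 0 a = 1 := by
  rw [Fchain, Fintype.sum_unique]
  simp [chainProb]

lemma cons_split {m : ℕ} (G : (Fin (m+1) → Edge5) → ℝ≥0∞) :
    ∑ w : Fin (m+1) → Edge5, G w = ∑ b : Edge5, ∑ v : Fin m → Edge5, G (Fin.cons b v) := by
  rw [← Equiv.sum_comp (Fin.consEquiv (fun _ : Fin (m+1) => Edge5)) G, Fintype.sum_prod_type]
  rfl

lemma forall_cons_ne {m : ℕ} (b : Edge5) (v : Fin m → Edge5) :
    (∀ j, (Fin.cons b v : Fin (m+1) → Edge5) j ≠ Edge5.i) ↔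
      (b ≠ Edge5.i ∧ ∀ j, v j ≠ Edge5.i) := by
  rw [Fin.forall_fin_succ]
  simp [Fin.cons_zero, Fin.cons_succ]

lemma chainProb_cons {m : ℕ} (a b : Edge5) (v : Fin m → Edge5) :
    chainProb P5 a (List.ofFn (Fin.cons b v)) = P5 a b * chainProb P5 b (List.ofFn v) := by
  rw [List.ofFn_succ]
  simp only [Fin.cons_zero, Fin.cons_succ]
  rfl

lemma Fchain_succ (m : ℕ) (a : Edge5) :
    Fchain (m+1) a = ∑ b : Edge5, if b ≠ Edge5.i then P5 a b * Fchain m b else 0 := by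
  rw [Fchain, cons_split]
  refine Finset.sum_congr rfl fun b _ => ?_
  by_cases hb : b = Edge5.i
  · subst hb
    simp only [forall_cons_ne]
    simp
  · rw [if_pos hb, Fchain, Finset.mul_sum]
    refine Finset.sum_congr rfl fun v _ => ?_
    simp only [forall_cons_ne]
    by_cases hv : ∀ j, v j ≠ Edge5.i
    · rw [if_pos ⟨hb, hv⟩, if_pos hv, chainProb_cons]
    · rw [if_neg (fun hc => hv hc.2), if_neg hv, mul_zero]

lemma Fchain_vals (m : ℕ) :
    Fchain m Edge5.e = (m + 1) * (2⁻¹ : ℝ≥0∞) ^ m ∧ Fchain m Edge5.f = (2⁻¹ : ℝ≥0∞) ^ m ∧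
      Fchain m Edge5.g = (2⁻¹ : ℝ≥0∞) ^ m ∧ Fchain m Edge5.h = (2⁻¹ : ℝ≥0∞) ^ m := by
  induction m with
  | zero => simp [Fchain_zero]
  | succ m ih =>
    obtain ⟨ihe, ihf, ihg, ihh⟩ := ih
    have key : ∀ a : Edge5, Fchain (m+1) a =
        P5 a .e * Fchain m .e + P5 a .f * Fchain m .f
          + P5 a .g * Fchain m .g + P5 a .h * Fchain m .h := by
      intro a
      rw [Fchain_succ, sum_edge5]
      simp
    have q2 : (1/2 : ℝ≥0∞) = 2⁻¹ := one_div 2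
    have q4 : (1/4 : ℝ≥0∞) = 2⁻¹ * 2⁻¹ := by
      rw [← ENNReal.mul_inv (by norm_num) (by norm_num)]
      norm_num
    have hgh : (2:ℝ≥0∞)⁻¹ * 2⁻¹ * 2⁻¹ ^ m + 2⁻¹ * 2⁻¹ * 2⁻¹ ^ m = 2⁻¹ ^ (m + 1) := by
      rw [show (2:ℝ≥0∞)⁻¹ * 2⁻¹ * 2⁻¹ ^ m + 2⁻¹ * 2⁻¹ * 2⁻¹ ^ m
          = (2⁻¹ * 2) * (2⁻¹ * 2⁻¹ ^ m) from by ring,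
        ENNReal.inv_mul_cancel (by norm_num) (by norm_num), one_mul, pow_succ]
      ring
    refine ⟨?_, ?_, ?_, ?_⟩
    · rw [key]
      simp only [ihe, ihf, ihg, ihh, P5, q5, tgt5, src5]
      simp [q2, q4]
      ring
    · rw [key]
      simp only [ihe, ihf, ihg, ihh, P5, q5, tgt5, src5]
      simp [q2, q4]
      exact hgh
    · rw [key]
      simp only [ihe, ihf, ihg, ihh, P5, q5, tgt5, src5]
      simp [q2, q4]
      exact hgh
    · rw [key]
      simp only [ihe, ihf, ihg, ihh, P5, q5, tgt5, src5]
      simp [q2, q4]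
      exact hgh

lemma wordProb_cons {m : ℕ} (p : Edge5 → ℝ≥0∞) (b : Edge5) (v : Fin m → Edge5) :
    wordProb p P5 (List.ofFn (Fin.cons b v)) = p b * chainProb P5 b (List.ofFn v) := by
  rw [List.ofFn_succ]
  simp only [Fin.cons_zero, Fin.cons_succ]
  rfl

lemma sum_words (p : Edge5 → ℝ≥0∞) (m : ℕ) :
    (∑ w : Fin (m+1) → Edge5,
        if ∀ j, w j ≠ Edge5.i then wordProb p P5 (List.ofFn w) else 0)
      = ((m + 1) * p Edge5.e + (p Edge5.f + p Edge5.g + p Edge5.h)) * (2⁻¹ : ℝ≥0∞) ^ m := by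
  rw [cons_split]
  have step : ∀ b : Edge5,
      (∑ v : Fin m → Edge5,
        if ∀ j, (Fin.cons b v : Fin (m+1) → Edge5) j ≠ Edge5.i
          then wordProb p P5 (List.ofFn (Fin.cons b v)) else 0)
        = if b ≠ Edge5.i then p b * Fchain m b else 0 := by
    intro b
    by_cases hb : b = Edge5.i
    · subst hb
      simp only [forall_cons_ne]
      simp
    · rw [if_pos hb, Fchain, Finset.mul_sum]
      refine Finset.sum_congr rfl fun v _ => ?_
      simp only [forall_cons_ne]
      by_cases hv : ∀ j, v j ≠ Edge5.i
      · rw [if_pos ⟨hb, hv⟩, if_pos hv, wordProb_cons]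
      · rw [if_neg (fun hc => hv hc.2), if_neg hv, mul_zero]
  simp only [step]
  rw [sum_edge5]
  obtain ⟨he, hf, hg, hh⟩ := Fchain_vals m
  simp [he, hf, hg, hh]
  ring

lemma mem_cylList_ofFn {n : ℕ} (w : Fin n → Edge5) (x : ℤ → Edge5) :
    x ∈ cylList 0 (List.ofFn w) ↔ ∀ j : Fin n, x ((j : ℕ) : ℤ) = w j := by
  constructor
  · intro hx j
    have := hx (Fin.cast (List.length_ofFn (f := w)).symm j)
    simpa [List.get_ofFn] using this
  · intro hx j
    have := hx (Fin.cast (List.length_ofFn (f := w)) j)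
    simp [List.get_ofFn] at this ⊢
    exact this

lemma nu_val {μ : Measure (ℤ → Edge5)} {p : Edge5 → ℝ≥0∞}
    (hμ : IsMarkov (SFT EdgeSet5) μ p P5) (n : ℕ) (hn : 0 < n) :
    μ.map (blockCode Label5) (cylSeg (fun _ : ℤ => Edge5.e) 0 ((n : ℤ) - 1)) =
      ((n : ℝ≥0∞) * p Edge5.e + (p Edge5.f + p Edge5.g + p Edge5.h)) * (2⁻¹ : ℝ≥0∞) ^ (n - 1) := by
  obtain ⟨m, rfl⟩ : ∃ m, n = m + 1 := ⟨n - 1, by omega⟩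
  rw [Measure.map_apply measurable_blockCode5 (measurableSet_cylSeg _ _ _)]
  have hpre : blockCode Label5 ⁻¹' cylSeg (fun _ : ℤ => Edge5.e) 0 (((m+1 : ℕ) : ℤ) - 1) =
      ⋃ w : {w : Fin (m+1) → Edge5 // ∀ j, w j ≠ Edge5.i}, cylList 0 (List.ofFn w.1) := by
    ext x
    simp only [Set.mem_preimage, Set.mem_iUnion]
    constructor
    · intro hx
      refine ⟨⟨fun j => x ((j : ℕ) : ℤ), fun j => ?_⟩, (mem_cylList_ofFn _ _).2 fun j => rfl⟩
      have h1 := hx ((j : ℕ) : ℤ) (by positivity) (by push_cast; omega)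
      exact (label5_eq_iff _).1 h1
    · rintro ⟨⟨w, hw⟩, hx⟩ i hi0 hi1
      have hj : i.toNat < m + 1 := by omega
      have h1 := (mem_cylList_ofFn _ _).1 hx ⟨i.toNat, hj⟩
      have h2 : ((i.toNat : ℕ) : ℤ) = i := by omega
      rw [h2] at h1
      show Label5 (x i) = Edge5.e
      rw [(label5_eq_iff _).2]
      rw [h1]
      exact hw _
  rw [hpre]
  have hdisj : Pairwise (Function.onFun Disjoint
      fun w : {w : Fin (m+1) → Edge5 // ∀ j, w j ≠ Edge5.i} => cylList 0 (List.ofFn w.1)) := by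
    intro w w' hww
    refine Set.disjoint_left.2 fun x hx hx' => hww ?_
    apply Subtype.ext
    funext j
    rw [← (mem_cylList_ofFn _ _).1 hx j, ← (mem_cylList_ofFn _ _).1 hx' j]
  rw [measure_iUnion hdisj fun w => measurableSet_cylList _ _, tsum_fintype]
  have hterm : ∀ w : {w : Fin (m+1) → Edge5 // ∀ j, w j ≠ Edge5.i},
      μ (cylList 0 (List.ofFn w.1)) = wordProb p P5 (List.ofFn w.1) := by
    intro w
    rw [List.ofFn_succ]
    exact mu_cylList hμ _ _
  simp only [hterm]
  have hsub : (∑ w : {w : Fin (m+1) → Edge5 // ∀ j, w j ≠ Edge5.i},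
        wordProb p P5 (List.ofFn w.1))
      = ∑ w : Fin (m+1) → Edge5,
          if ∀ j, w j ≠ Edge5.i then wordProb p P5 (List.ofFn w) else 0 := by
    rw [← Finset.sum_filter]
    exact (Finset.sum_subtype
      (Finset.univ.filter fun w : Fin (m+1) → Edge5 => ∀ j, w j ≠ Edge5.i)
      (fun x => by simp) (fun w => wordProb p P5 (List.ofFn w))).symm
  rw [hsub, sum_words]
  push_cast
  norm_num

end Aux

/-- **Example 3.1.**
For the labelled graph of Figure 1, the stationary fully supported 1-step Markov measure
`μ` with the given transition probabilities is pushed forward by `π` to a measure `ν`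
which is not a Gibbs measure for any continuous potential. -/
theorem example_transitional_not_gibbs
    (X : Set (ℤ → Edge5)) (hX : X = SFT EdgeSet5)
    (Y : Set (ℤ → Edge5)) (hY : Y = blockCode Label5 '' X)
    (μ : Measure (ℤ → Edge5)) (p : Edge5 → ℝ≥0∞)
    (hstat : ∀ v : Edge5, p v = ∑ u : Edge5, p u * P5 u v)
    (hμ : IsMarkov X μ p P5) (hfs : FullySupported X μ) :
    ∀ f : (ℤ → Edge5) → ℝ, ContinuousOn f Y →
      ¬ IsGibbs Y (μ.map (blockCode Label5)) f := by
  subst hX hY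
  intro f _ hgibbs
  obtain ⟨K₁, K₂, Pr, hK₁, hK₂, hG⟩ := hgibbs
  -- the fixed point `a^∞`
  set z : ℤ → Edge5 := fun _ => Edge5.e with hzdef
  have hzX : z ∈ SFT EdgeSet5 := fun _ => rfl
  have hzY : z ∈ blockCode Label5 '' SFT EdgeSet5 := ⟨z, hzX, rfl⟩
  have hfix : ∀ j : ℕ, shiftMap^[j] z = z := fun j => Function.iterate_fixed rfl j
  have hbirk : ∀ n : ℕ, birkhoff f z n = n * f z := by
    intro n
    unfold birkhoff
    simp [hfix]
  -- facts about `p`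
  have hsum := hμ.initSum
  have hple : ∀ a, p a ≤ 1 := fun a =>
    hsum ▸ Finset.single_le_sum (fun b _ => zero_le) (Finset.mem_univ a)
  have hne : ∀ a, p a ≠ ⊤ := fun a => ne_top_of_le_ne_top ENNReal.one_ne_top (hple a)
  have hpe_pos : 0 < p Edge5.e := by
    have h1 := hfs [Edge5.e] (wordIn_of_chain Edge5.e [] List.Chain.nil)
    rw [hμ.cylIn [Edge5.e] (wordIn_of_chain Edge5.e [] List.Chain.nil)] at h1
    show 0 < p Edge5.e
    calc (0:ℝ≥0∞) < p Edge5.e * chainProb P5 Edge5.e [] := h1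
    _ = p Edge5.e := by simp [chainProb]
  set pe : ℝ := (p Edge5.e).toReal with hpedef
  set ps : ℝ := (p Edge5.f + p Edge5.g + p Edge5.h).toReal with hpsdef
  have hpe : 0 < pe := ENNReal.toReal_pos hpe_pos.ne' (hne _)
  have hpe1 : pe ≤ 1 := by
    rw [hpedef, ← ENNReal.toReal_one]
    exact ENNReal.toReal_mono ENNReal.one_ne_top (hple _)
  have hps0 : 0 ≤ ps := ENNReal.toReal_nonneg
  have hps3 : ps ≤ 3 := by
    have h3 : p Edge5.f + p Edge5.g + p Edge5.h ≤ 3 := by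
      calc p Edge5.f + p Edge5.g + p Edge5.h ≤ 1 + 1 + 1 := by
            gcongr <;> exact hple _
      _ = 3 := by norm_num
    calc ps ≤ ((3:ℝ≥0∞)).toReal := ENNReal.toReal_mono (by norm_num) h3
    _ = 3 := by norm_num
  -- the measure of the cylinder of `aⁿ`, in real form
  have hval : ∀ n : ℕ, 0 < n →
      ((μ.map (blockCode Label5)) (cylSeg z 0 ((n : ℤ) - 1))).toReal
        = (n * pe + ps) * (2⁻¹ : ℝ) ^ (n - 1) := by
    intro n hn
    rw [hzdef, nu_val hμ n hn]
    rw [ENNReal.toReal_mul, ENNReal.toReal_pow, ENNReal.toReal_inv]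
    rw [ENNReal.toReal_add (by
        exact ENNReal.mul_ne_top (by simp) (hne _)) (by
        exact ENNReal.add_ne_top.2 ⟨ENNReal.add_ne_top.2 ⟨hne _, hne _⟩, hne _⟩)]
    rw [ENNReal.toReal_mul]
    norm_num
    rfl
  -- Gibbs inequality in exponential form
  set c : ℝ := Real.exp (f z - Pr) with hcdef
  have hcpos : 0 < c := Real.exp_pos _
  have key : ∀ n : ℕ, 1 ≤ n →
      K₁ * c ^ n < (n * pe + ps) * (2⁻¹ : ℝ) ^ (n - 1) ∧
        (n * pe + ps) * (2⁻¹ : ℝ) ^ (n - 1) < K₂ * c ^ n := by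
    intro n hn
    have h := hG z hzY n hn
    rw [hval n hn] at h
    have hexp : Real.exp (-(n : ℝ) * Pr + birkhoff f z n) = c ^ n := by
      rw [hbirk n, show -(n : ℝ) * Pr + n * f z = n * (f z - Pr) by ring,
        Real.exp_nat_mul]
    rw [hexp] at h
    exact ⟨(lt_div_iff₀ (pow_pos hcpos n)).1 h.1, (div_lt_iff₀ (pow_pos hcpos n)).1 h.2⟩
  set t : ℝ := 2 * c with htdef
  have hmain : ∀ n : ℕ, 1 ≤ n → K₁ * t ^ n < 8 * n ∧ 2 * pe * n < K₂ * t ^ n := by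
    intro n hn
    obtain ⟨m, rfl⟩ : ∃ m, n = m + 1 := ⟨n - 1, by omega⟩
    obtain ⟨h1, h2⟩ := key (m+1) hn
    have hpow : ((2:ℝ)⁻¹) ^ m * 2 ^ m = 1 := by
      rw [← mul_pow]
      norm_num
    have hn1 : (1:ℝ) ≤ (m+1 : ℕ) := by exact_mod_cast hn
    have hA0 : 0 ≤ ((m+1 : ℕ) : ℝ) * pe + ps := by positivity
    have hAle : ((m+1 : ℕ) : ℝ) * pe + ps ≤ ((m+1 : ℕ) : ℝ) + 3 := by
      have : ((m+1 : ℕ) : ℝ) * pe ≤ ((m+1 : ℕ) : ℝ) * 1 := by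
        gcongr
      nlinarith
    constructor
    · -- K₁ t^n < 8 n
      have e1 : K₁ * c ^ (m+1) * 2 ^ m <
          (((m+1 : ℕ) : ℝ) * pe + ps) * (2⁻¹ : ℝ) ^ m * 2 ^ m :=
        mul_lt_mul_of_pos_right (by simpa using h1) (pow_pos two_pos m)
      rw [mul_assoc (((m+1 : ℕ) : ℝ) * pe + ps), hpow, mul_one] at e1
      have e2 : K₁ * t ^ (m+1) = 2 * (K₁ * c ^ (m+1) * 2 ^ m) := by
        rw [htdef, mul_pow]
        ring
      rw [e2]
      calc 2 * (K₁ * c ^ (m+1) * 2 ^ m) < 2 * (((m+1 : ℕ) : ℝ) * pe + ps) := by linarith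
      _ ≤ 2 * (((m+1 : ℕ) : ℝ) + 3) := by linarith
      _ ≤ 8 * ((m+1 : ℕ) : ℝ) := by linarith
    · -- 2 pe n < K₂ t^n
      have e1 : (((m+1 : ℕ) : ℝ) * pe + ps) * (2⁻¹ : ℝ) ^ m * 2 ^ m <
          K₂ * c ^ (m+1) * 2 ^ m :=
        mul_lt_mul_of_pos_right (by simpa using h2) (pow_pos two_pos m)
      rw [mul_assoc (((m+1 : ℕ) : ℝ) * pe + ps), hpow, mul_one] at e1
      have e2 : K₂ * t ^ (m+1) = 2 * (K₂ * c ^ (m+1) * 2 ^ m) := by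
        rw [htdef, mul_pow]
        ring
      rw [e2]
      have : 2 * pe * ((m+1 : ℕ) : ℝ) ≤ 2 * (((m+1 : ℕ) : ℝ) * pe + ps) := by nlinarith
      linarith
  -- final contradiction
  rcases le_or_gt t 1 with ht | ht
  · -- subexponential case: the lower Gibbs bound fails
    have ht0 : 0 ≤ t := by positivity
    obtain ⟨n₀, hn₀⟩ := exists_nat_gt (K₂ / (2 * pe))
    have h := (hmain (n₀ + 1) (by omega)).2
    have htn : t ^ (n₀ + 1) ≤ 1 := pow_le_one₀ ht0 ht
    have h2 : 2 * pe * ((n₀ + 1 : ℕ) : ℝ) < K₂ := by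
      calc 2 * pe * ((n₀ + 1 : ℕ) : ℝ) < K₂ * t ^ (n₀+1) := h
      _ ≤ K₂ * 1 := by nlinarith
      _ = K₂ := mul_one _
    have h3 : K₂ < 2 * pe * ((n₀ + 1 : ℕ) : ℝ) := by
      rw [div_lt_iff₀ (by positivity)] at hn₀
      push_cast
      push_cast at hn₀
      nlinarith
    linarith
  · -- exponential case: the upper Gibbs bound fails
    set d : ℝ := t - 1 with hddef
    have hdpos : 0 < d := by rw [hddef]; linarith
    obtain ⟨n₀, hn₀⟩ := exists_nat_gt (16 / (K₁ * d ^ 2))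
    set m : ℕ := n₀ + 1 with hmdef
    have hm1 : (1:ℝ) ≤ (m : ℝ) := by
      rw [hmdef]
      push_cast
      linarith [Nat.cast_nonneg (α := ℝ) n₀]
    have hmgt : 16 / (K₁ * d ^ 2) < (m : ℝ) := by
      rw [hmdef]
      push_cast
      push_cast at hn₀
      linarith
    have hmgt' : 16 < K₁ * d ^ 2 * (m : ℝ) := by
      rw [div_lt_iff₀ (by positivity)] at hmgt
      linarith
    have h := (hmain (2 * m) (by omega)).1
    have hb : 1 + (m : ℝ) * d ≤ t ^ m := by
      have h0 := one_add_mul_le_pow (a := d) (by linarith) m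
      rw [show (1:ℝ) + d = t by rw [hddef]; ring] at h0
      exact_mod_cast h0
    have hsq : ((m : ℝ) * d) ^ 2 ≤ (t ^ m) ^ 2 := by
      have hmd : 0 ≤ (m : ℝ) * d := by positivity
      have : (m : ℝ) * d ≤ t ^ m := by linarith
      exact pow_le_pow_left₀ hmd this 2
    have ht2 : t ^ (2 * m) = (t ^ m) ^ 2 := by
      rw [← pow_mul, mul_comm]
    have e1 : K₁ * ((m : ℝ) * d) ^ 2 ≤ K₁ * t ^ (2 * m) := by
      rw [ht2]
      exact mul_le_mul_of_nonneg_left hsq hK₁.le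
    have e2 : K₁ * ((m : ℝ) * d) ^ 2 = K₁ * d ^ 2 * (m : ℝ) * (m : ℝ) := by ring
    have e3 : 16 * (m : ℝ) < K₁ * d ^ 2 * (m : ℝ) * (m : ℝ) := by nlinarith
    have e4 : (8 : ℝ) * ((2 * m : ℕ) : ℝ) = 16 * (m : ℝ) := by push_cast; ring
    linarith [e1, e2 ▸ e1, h, e4 ▸ h]

end GibbsPaper
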